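/- arXiv:2603.29361 — 6 statements merged into one kernel-verified Lean document; each statement's English description precedes it below -/
import Mathlib

section
/- Let n ≥ 1 and m be natural numbers, let t : Fin n → ((Fin m → Bool) → Bool), define the DNF classifier φ : (Fin m → Bool) → Bool by φ x = true iff ∃ i, t i x = true, and define the majority-vote classifier κ : (Fin m → Bool) → Bool by κ x = true iff (Finset.univ.filter (fun i => t i x = true)).card + (n−1) > n − (Finset.univ.filter (fun i => t i x = true)).card (n term-trees plus n−1 constant class-1 trees). Let v : Fin m → Bool satisfy φ v = true. Then for every Finset X ⊆ Fin m: X is minimal (with respect to ⊆) such that every x : Fin m → Bool with x i = v i for all i ∈ X satisfies κ x = true, if and only if X is minimal such that every such x satisfies φ x = true. In other words, X is an abductive explanation (AXp) of κ at v for class 1 if and only if the conjunction ⋀_{i∈X}(x_i = v_i) is a prime implicant of φ. -/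
theorem rfmv_axp_iff_prime_implicant (n m : ℕ) (hn : 1 ≤ n)
    (t : Fin n → ((Fin m → Bool) → Bool))
    (φ : (Fin m → Bool) → Bool)
    (hφ : ∀ x, φ x = true ↔ ∃ i, t i x = true)
    (κ : (Fin m → Bool) → Bool)
    (hκ : ∀ x, κ x = true ↔
      ((Finset.univ.filter (fun i => t i x = true)).card + (n - 1) >
        n - (Finset.univ.filter (fun i => t i x = true)).card))
    (v : Fin m → Bool) (hv : φ v = true) :
    ∀ X : Finset (Fin m),
      ((∀ x : Fin m → Bool, (∀ i ∈ X, x i = v i) → κ x = true) ∧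
        ∀ X' ⊂ X, ¬ (∀ x : Fin m → Bool, (∀ i ∈ X', x i = v i) → κ x = true)) ↔
      ((∀ x : Fin m → Bool, (∀ i ∈ X, x i = v i) → φ x = true) ∧
        ∀ X' ⊂ X, ¬ (∀ x : Fin m → Bool, (∀ i ∈ X', x i = v i) → φ x = true)) := by
  have key : ∀ x, κ x = true ↔ φ x = true := by
    intro x
    rw [hκ, hφ]
    constructor
    · intro h
      by_contra hc
      push_neg at hc
      have : (Finset.univ.filter (fun i => t i x = true)).card = 0 := by
        rw [Finset.card_eq_zero]
        ext i
        simp [hc i]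
      omega
    · rintro ⟨i, hi⟩
      have : 0 < (Finset.univ.filter (fun i => t i x = true)).card :=
        Finset.card_pos.mpr ⟨i, by simp [hi]⟩
      have hle : (Finset.univ.filter (fun i => t i x = true)).card ≤ n :=
        (Finset.card_filter_le _ _).trans (by simp)
      omega
  intro X
  constructor
  · rintro ⟨h1, h2⟩
    exact ⟨fun x hx => (key x).mp (h1 x hx),
      fun X' hX' h => h2 X' hX' fun x hx => (key x).mpr (h x hx)⟩
  · rintro ⟨h1, h2⟩
    exact ⟨fun x hx => (key x).mpr (h1 x hx),
      fun X' hX' h => h2 X' hX' fun x hx => (key x).mp (h x hx)⟩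
end

section
/- Let T : Fin n → DTree (Fin K) be a random forest with majority voting over m real-valued features with K classes. Then there exists a boosted-tree model — namely, for each class c : Fin K a family B c : Fin n → DTree ℝ of real-weighted decision trees, each B c t having the same node structure (and hence at most as many nodes) as T t — such that for every x : Fin m → ℝ and every class c : Fin K, the boosted-tree score ∑_{t : Fin n} eval (B c t) x equals the number of trees voting for c, i.e. (Finset.univ.filter (fun t => eval (T t) x = c)).card. Consequently, for every x the set of classes maximizing the boosted-tree score coincides with the set of classes maximizing the majority-vote count, so the boosted tree is equivalent to the random forest and its total size is polynomial (at most K·n trees, each no larger than the corresponding original tree). -/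
/-- Decision trees over `m` real-valued features with labels in `L`. -/
inductive DTree (m : ℕ) (L : Type) : Type
  | leaf (c : L) : DTree m L
  | node (i : Fin m) (d : ℝ) (tl tr : DTree m L) : DTree m L

/-- Evaluation of a decision tree on an input point. -/
noncomputable def DTree.eval {m : ℕ} {L : Type} : DTree m L → (Fin m → ℝ) → L
  | .leaf c, _ => c
  | .node i d tl tr, x => if x i < d then tl.eval x else tr.eval x

/-- Two trees (with possibly different label types) have the same node structure:
same internal nodes with the same features and thresholds. -/
def DTree.sameShape {m : ℕ} {L L' : Type} : DTree m L → DTree m L' → Prop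
  | .leaf _, .leaf _ => True
  | .node i d tl tr, .node i' d' tl' tr' =>
      i = i' ∧ d = d' ∧ tl.sameShape tl' ∧ tr.sameShape tr'
  | _, _ => False


noncomputable def DTree.mapL {m : ℕ} {L L' : Type} (f : L → L') : DTree m L → DTree m L'
  | .leaf c => .leaf (f c)
  | .node i d tl tr => .node i d (tl.mapL f) (tr.mapL f)

theorem DTree.mapL_sameShape {m : ℕ} {L L' : Type} (f : L → L') (t : DTree m L) :
    DTree.sameShape (t.mapL f) t := by
  induction t with
  | leaf c => trivial
  | node i d tl tr ihl ihr => exact ⟨rfl, rfl, ihl, ihr⟩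

theorem DTree.mapL_eval {m : ℕ} {L L' : Type} (f : L → L') (t : DTree m L) (x : Fin m → ℝ) :
    (t.mapL f).eval x = f (t.eval x) := by
  induction t with
  | leaf c => rfl
  | node i d tl tr ihl ihr => simp [DTree.mapL, DTree.eval]; split <;> simp [ihl, ihr]

/-- Every random forest with majority voting has an equivalent boosted tree of
polynomial size: for each class `c`, a family of real-weighted trees of the same
shape as the original trees, whose summed score at `x` equals the vote count of
class `c`; consequently the sets of maximizing classes coincide on every input. -/
theorem rfmv_to_bt (m n K : ℕ) (T : Fin n → DTree m (Fin K)) :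
    ∃ B : Fin K → Fin n → DTree m ℝ,
      (∀ (c : Fin K) (t : Fin n), DTree.sameShape (B c t) (T t)) ∧
      (∀ (x : Fin m → ℝ) (c : Fin K),
        (∑ t : Fin n, (B c t).eval x) =
          ((Finset.univ.filter (fun t : Fin n => (T t).eval x = c)).card : ℝ)) ∧
      (∀ x : Fin m → ℝ,
        {c : Fin K | ∀ c' : Fin K,
            (∑ t : Fin n, (B c' t).eval x) ≤ (∑ t : Fin n, (B c t).eval x)} =
        {c : Fin K | ∀ c' : Fin K,
            (Finset.univ.filter (fun t : Fin n => (T t).eval x = c')).card ≤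
              (Finset.univ.filter (fun t : Fin n => (T t).eval x = c)).card}) := by
  refine ⟨fun c t => (T t).mapL (fun l => if l = c then (1:ℝ) else 0), 
    fun c t => DTree.mapL_sameShape _ _, ?_, ?_⟩
  · intro x c
    simp only [DTree.mapL_eval]
    rw [Finset.card_filter]
    push_cast
    exact Finset.sum_congr rfl (fun t _ => by split <;> simp_all)
  · intro x
    have h : ∀ c : Fin K, (∑ t : Fin n, ((T t).mapL (fun l => if l = c then (1:ℝ) else 0)).eval x)
        = ((Finset.univ.filter (fun t : Fin n => (T t).eval x = c)).card : ℝ) := by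
      intro c
      simp only [DTree.mapL_eval]
      rw [Finset.card_filter]
      push_cast
      exact Finset.sum_congr rfl (fun t _ => by split <;> simp_all)
    ext c
    simp only [Set.mem_setOf_eq, h, Nat.cast_le]
end

section
/- Let α be a finite type (with decidable equality), let P : Finset α → Prop be decidable and monotone, i.e., for all Finsets X ⊆ Y, P X implies P Y, and assume P Finset.univ holds. Let ℓ be a list enumerating every element of α exactly once, and define the deletion-based result X₀ := ℓ.foldl (fun X i => if P (X.erase i) then X.erase i else X) Finset.univ. Then P X₀ holds, for every i ∈ X₀ one has ¬ P (X₀.erase i), and consequently no proper subset Y ⊊ X₀ satisfies P; that is, X₀ is a subset-minimal set satisfying P. -/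
private lemma deletion_aux {α : Type*} [DecidableEq α]
    (P : Finset α → Prop) [DecidablePred P]
    (hmono : ∀ X Y : Finset α, X ⊆ Y → P X → P Y) :
    ∀ (rest : List α) (X : Finset α), P X →
      (let R := rest.foldl (fun X i => if P (X.erase i) then X.erase i else X) X
       R ⊆ X ∧ P R ∧ ∀ i ∈ rest, i ∈ R → ¬ P (R.erase i)) := by
  intro rest
  induction rest with
  | nil => intro X hX; exact ⟨subset_rfl, hX, by simp⟩
  | cons a rest ih =>
    intro X hX
    simp only [List.foldl_cons]
    by_cases h : P (X.erase a)
    · rw [if_pos h]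
      obtain ⟨hsub, hPR, hcrit⟩ := ih (X.erase a) h
      refine ⟨hsub.trans (Finset.erase_subset a X), hPR, ?_⟩
      intro i hi hiR
      rcases List.mem_cons.mp hi with rfl | hi'
      · exact absurd (hsub hiR) (Finset.notMem_erase i X)
      · exact hcrit i hi' hiR
    · rw [if_neg h]
      obtain ⟨hsub, hPR, hcrit⟩ := ih X hX
      refine ⟨hsub, hPR, ?_⟩
      intro i hi hiR
      rcases List.mem_cons.mp hi with rfl | hi'
      · intro hP
        exact h (hmono _ _ (Finset.erase_subset_erase i hsub) hP)
      · exact hcrit i hi' hiR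

/-- Correctness of the generic deletion-based (linear search) algorithm for
extracting a subset-minimal set satisfying a monotone predicate. -/
theorem deletion_based_minimal {α : Type*} [Fintype α] [DecidableEq α]
    (P : Finset α → Prop) [DecidablePred P]
    (hmono : ∀ X Y : Finset α, X ⊆ Y → P X → P Y)
    (huniv : P Finset.univ)
    (ℓ : List α) (hℓ : ∀ a : α, ℓ.count a = 1) :
    let X₀ := ℓ.foldl (fun X i => if P (X.erase i) then X.erase i else X) Finset.univ
    P X₀ ∧ (∀ i ∈ X₀, ¬ P (X₀.erase i)) ∧ ∀ Y : Finset α, Y ⊂ X₀ → ¬ P Y := by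
  intro X₀
  obtain ⟨_, hPR, hcrit⟩ := deletion_aux P hmono ℓ Finset.univ huniv
  have hmem : ∀ a : α, a ∈ ℓ := fun a => by
    have := hℓ a; exact List.count_pos_iff.mp (by omega)
  refine ⟨hPR, fun i hi => hcrit i (hmem i) hi, ?_⟩
  intro Y hY hPY
  obtain ⟨i, hiX, hiY⟩ := Finset.exists_of_ssubset hY
  have : Y ⊆ X₀.erase i := fun x hx =>
    Finset.mem_erase.mpr ⟨fun h => hiY (h ▸ hx), hY.subset hx⟩
  exact hcrit i (hmem i) hiX (hmono _ _ this hPY)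
end

section
/- Fix m : ℕ, feature domains D : Fin m → Type, the feature space 𝔽 = Π i, D i, a type K of classes, a classifier κ : 𝔽 → K, and an instance v ∈ 𝔽 with κ v = c. Define WAXp(X) for Finsets X ⊆ Fin m by: WAXp(X) holds iff κ x = c for every x ∈ 𝔽 with x i = v i for all i ∈ X. Then: (i) WAXp is monotone (X ⊆ Y and WAXp(X) imply WAXp(Y)); (ii) WAXp(Finset.univ) holds; and therefore (iii) assuming WAXp is decidable, the deletion-based result X₀ := ℓ.foldl (fun X i => if WAXp(X.erase i) then X.erase i else X) Finset.univ, where ℓ enumerates each element of Fin m exactly once, satisfies WAXp(X₀) while no proper subset of X₀ satisfies WAXp — i.e., the deletion-based algorithm returns an abductive explanation (AXp). -/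
private lemma axp_foldl_subset {m : ℕ} (W : Finset (Fin m) → Prop)
    [DecidablePred W] :
    ∀ (L : List (Fin m)) (X : Finset (Fin m)),
      L.foldl (fun X i => if W (X.erase i) then X.erase i else X) X ⊆ X := by
  intro L
  induction L with
  | nil => intro X; simp
  | cons a L ih =>
      intro X
      simp only [List.foldl_cons]
      refine (ih _).trans ?_
      split
      · exact Finset.erase_subset _ _
      · exact subset_rfl

private lemma axp_foldl_waxp {m : ℕ} (W : Finset (Fin m) → Prop)
    [DecidablePred W] :
    ∀ (L : List (Fin m)) (X : Finset (Fin m)), W X →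
      W (L.foldl (fun X i => if W (X.erase i) then X.erase i else X) X) := by
  intro L
  induction L with
  | nil => intro X h; simpa using h
  | cons a L ih =>
      intro X h
      simp only [List.foldl_cons]
      by_cases hw : W (X.erase a)
      · simp only [hw, if_pos]; exact ih _ hw
      · simp only [hw, if_neg, not_false_iff]; exact ih _ h

private lemma axp_foldl_min {m : ℕ} (W : Finset (Fin m) → Prop)
    [DecidablePred W]
    (mono : ∀ X Y : Finset (Fin m), X ⊆ Y → W X → W Y) :
    ∀ (L : List (Fin m)) (X : Finset (Fin m)) (i : Fin m), i ∈ L →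
      i ∈ L.foldl (fun X i => if W (X.erase i) then X.erase i else X) X →
      ¬ W ((L.foldl (fun X i => if W (X.erase i) then X.erase i else X) X).erase i) := by
  intro L
  induction L with
  | nil => intro X i hi; simp at hi
  | cons a L ih =>
      intro X i hi hmem
      simp only [List.foldl_cons] at hmem ⊢
      rcases List.mem_cons.mp hi with rfl | hiL
      · by_cases hw : W (X.erase i)
        · exfalso
          simp only [hw, if_pos] at hmem
          have := axp_foldl_subset W L (X.erase i) hmem
          exact (Finset.notMem_erase i X) this
        · simp only [hw, if_neg, not_false_iff] at hmem ⊢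
          intro hcon
          apply hw
          refine mono _ _ ?_ hcon
          exact Finset.erase_subset_erase i (axp_foldl_subset W L X)
      · exact ih _ i hiL hmem

/-- The weak-AXp predicate is monotone, holds for the full feature set, and the
deletion-based algorithm returns an abductive explanation (AXp): a weak AXp none
of whose proper subsets is a weak AXp. -/
theorem deletion_based_axp (m : ℕ) (D : Fin m → Type) (K : Type)
    (κ : (∀ i, D i) → K) (v : ∀ i, D i) (c : K) (hv : κ v = c)
    (WAXp : Finset (Fin m) → Prop)
    (hdef : ∀ X : Finset (Fin m),
      WAXp X ↔ ∀ x : ∀ i, D i, (∀ i ∈ X, x i = v i) → κ x = c)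
    [DecidablePred WAXp]
    (ℓ : List (Fin m)) (hℓ : ∀ a : Fin m, ℓ.count a = 1) :
    (∀ X Y : Finset (Fin m), X ⊆ Y → WAXp X → WAXp Y) ∧
    WAXp Finset.univ ∧
    WAXp (ℓ.foldl (fun X i => if WAXp (X.erase i) then X.erase i else X)
        Finset.univ) ∧
    (∀ Y : Finset (Fin m),
      Y ⊂ ℓ.foldl (fun X i => if WAXp (X.erase i) then X.erase i else X)
        Finset.univ → ¬ WAXp Y) := by
  have mono : ∀ X Y : Finset (Fin m), X ⊆ Y → WAXp X → WAXp Y := by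
    intro X Y hXY hX
    exact (hdef Y).mpr fun x hx => (hdef X).mp hX x fun i hi => hx i (hXY hi)
  have huniv : WAXp Finset.univ := by
    refine (hdef _).mpr fun x hx => ?_
    have : x = v := funext fun i => hx i (Finset.mem_univ i)
    rw [this, hv]
  refine ⟨mono, huniv, axp_foldl_waxp WAXp ℓ _ huniv, ?_⟩
  intro Y hY hWY
  obtain ⟨i, hiF, hiY⟩ := Finset.exists_of_ssubset hY
  have hsub := hY.subset
  have hiℓ : i ∈ ℓ := by
    have := hℓ i; exact List.count_pos_iff.mp (by omega)
  have hmin := axp_foldl_min WAXp mono ℓ Finset.univ i hiℓ hiF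
  apply hmin
  refine mono _ _ ?_ hWY
  intro j hj
  exact Finset.mem_erase.mpr ⟨fun h => hiY (h ▸ hj), hsub hj⟩
end

section
/- Fix m : ℕ, feature domains D : Fin m → Type, the feature space 𝔽 = Π i, D i, a type K of classes, a classifier κ : 𝔽 → K, and an instance v ∈ 𝔽 with κ v = c; assume κ is not constant, i.e., there exists x ∈ 𝔽 with κ x ≠ c. Define WCXp(Y) for Finsets Y ⊆ Fin m by: WCXp(Y) holds iff there exists x ∈ 𝔽 with x i = v i for all i ∉ Y and κ x ≠ c. Then: (i) WCXp is monotone (Y ⊆ Z and WCXp(Y) imply WCXp(Z)); (ii) WCXp(Finset.univ) holds; and therefore (iii) assuming WCXp is decidable, the deletion-based result Y₀ := ℓ.foldl (fun Y i => if WCXp(Y.erase i) then Y.erase i else Y) Finset.univ, where ℓ enumerates each element of Fin m exactly once, satisfies WCXp(Y₀) while no proper subset of Y₀ satisfies WCXp — i.e., the deletion-based algorithm returns a contrastive explanation (CXp). -/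
section Aux

variable {α : Type*} [DecidableEq α] (P : Finset α → Prop) [DecidablePred P]

private def delStep (Y : Finset α) (i : α) : Finset α :=
  if P (Y.erase i) then Y.erase i else Y

private lemma delStep_subset (Y : Finset α) (i : α) : delStep P Y i ⊆ Y := by
  unfold delStep; split
  · exact Finset.erase_subset _ _
  · exact Finset.Subset.refl _

private lemma foldl_subset (l : List α) (Y : Finset α) :
    l.foldl (delStep P) Y ⊆ Y := by
  induction l generalizing Y with
  | nil => exact Finset.Subset.refl _
  | cons a t ih => exact (ih (delStep P Y a)).trans (delStep_subset P Y a)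

private lemma foldl_wcxp (l : List α) (Y : Finset α) (h : P Y) :
    P (l.foldl (delStep P) Y) := by
  induction l generalizing Y with
  | nil => exact h
  | cons a t ih =>
    apply ih
    unfold delStep; split
    · assumption
    · exact h

private lemma foldl_min (hmono : ∀ Y Z : Finset α, Y ⊆ Z → P Y → P Z)
    (l : List α) (Y : Finset α) (i : α) (hi : i ∈ l)
    (hi' : i ∈ l.foldl (delStep P) Y) : ¬ P ((l.foldl (delStep P) Y).erase i) := by
  induction l generalizing Y with
  | nil => simp at hi
  | cons a t ih =>
    rcases List.mem_cons.mp hi with rfl | hmem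
    · by_cases ht : i ∈ t
      · simp only [List.foldl_cons] at hi' ⊢
        exact ih (delStep P Y i) ht hi'
      · -- i = a, not in t, so its step is the first
        simp only [List.foldl_cons] at hi' ⊢
        by_cases hP : P (Y.erase i)
        · -- i was erased, contradiction with hi'
          exfalso
          have : i ∈ delStep P Y i := foldl_subset P t _ hi'
          unfold delStep at this
          rw [if_pos hP] at this
          exact (Finset.notMem_erase i Y) this
        · have hstep : delStep P Y i = Y := by unfold delStep; rw [if_neg hP]
          intro hc
          apply hP
          apply hmono _ _ _ hc
          apply Finset.erase_subset_erase
          rw [hstep] at hi' ⊢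
          exact foldl_subset P t Y
    · simp only [List.foldl_cons] at hi' ⊢
      exact ih _ hmem hi'

end Aux

/-- The weak-CXp predicate is monotone, holds for the full feature set (when the
classifier is not constant), and the deletion-based algorithm returns a
contrastive explanation (CXp): a weak CXp none of whose proper subsets is a weak
CXp. -/
theorem deletion_based_cxp (m : ℕ) (D : Fin m → Type) (K : Type)
    (κ : (∀ i, D i) → K) (v : ∀ i, D i) (c : K) (hv : κ v = c)
    (hnonconst : ∃ x : ∀ i, D i, κ x ≠ c)
    (WCXp : Finset (Fin m) → Prop)
    (hdef : ∀ Y : Finset (Fin m),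
      WCXp Y ↔ ∃ x : ∀ i, D i, (∀ i ∉ Y, x i = v i) ∧ κ x ≠ c)
    [DecidablePred WCXp]
    (ℓ : List (Fin m)) (hℓ : ∀ a : Fin m, ℓ.count a = 1) :
    (∀ Y Z : Finset (Fin m), Y ⊆ Z → WCXp Y → WCXp Z) ∧
    WCXp Finset.univ ∧
    WCXp (ℓ.foldl (fun Y i => if WCXp (Y.erase i) then Y.erase i else Y)
        Finset.univ) ∧
    (∀ Z : Finset (Fin m),
      Z ⊂ ℓ.foldl (fun Y i => if WCXp (Y.erase i) then Y.erase i else Y)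
        Finset.univ → ¬ WCXp Z) := by
  have hmono : ∀ Y Z : Finset (Fin m), Y ⊆ Z → WCXp Y → WCXp Z := by
    intro Y Z hYZ hY
    rw [hdef] at hY ⊢
    obtain ⟨x, hx, hxc⟩ := hY
    exact ⟨x, fun i hi => hx i (fun h => hi (hYZ h)), hxc⟩
  have huniv : WCXp Finset.univ := by
    rw [hdef]
    obtain ⟨x, hx⟩ := hnonconst
    exact ⟨x, fun i hi => absurd (Finset.mem_univ i) hi, hx⟩
  have hfold : (fun Y i => if WCXp (Y.erase i) then Y.erase i else Y) = delStep WCXp := by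
    funext Y i; rfl
  refine ⟨hmono, huniv, ?_, ?_⟩
  · rw [hfold]; exact foldl_wcxp WCXp ℓ Finset.univ huniv
  · rw [hfold]
    intro Z hZ hWZ
    obtain ⟨hsub, hne⟩ := Finset.ssubset_iff_subset_ne.mp hZ
    obtain ⟨i, hiY, hiZ⟩ := Finset.exists_of_ssubset hZ
    have hmem : i ∈ ℓ := by
      have := hℓ i
      exact List.count_pos_iff.mp (by omega)
    have := foldl_min WCXp hmono ℓ Finset.univ i hmem hiY
    exact this (hmono Z _ (Finset.subset_erase.mpr ⟨hsub, hiZ⟩) hWZ)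
end

section
/- Fix m : ℕ, feature domains D : Fin m → Type, the feature space 𝔽 = Π i, D i, a type K of classes, a classifier κ : 𝔽 → K, and an instance v ∈ 𝔽 with κ v = c. Let 𝒞 be a family of Finsets of Fin m each of which is a weak CXp of the prediction κ v = c, and let X* be a Finset of minimum cardinality among all Finsets that intersect every member of 𝒞 (a minimum hitting set of 𝒞). If X* is itself a weak AXp (κ x = c for every x ∈ 𝔽 with x i = v i for all i ∈ X*), then every weak AXp X satisfies |X| ≥ |X*|; consequently X* is a weak AXp of minimum cardinality, and hence X* is an AXp (subset-minimal weak AXp) of smallest size. This establishes the correctness of the hitting-set–based algorithm for computing a smallest abductive explanation: the first minimum hitting set of the CXps found so far that is a valid weak AXp is guaranteed to be a smallest AXp. -/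
/-- Correctness of the hitting-set-based algorithm for smallest abductive
explanations: if `Xstar` is a minimum-cardinality hitting set of a family `𝒞` of
weak CXps and `Xstar` is itself a weak AXp, then every weak AXp has cardinality
at least that of `Xstar`; hence `Xstar` is a weak AXp of minimum cardinality and
a (subset-minimal) AXp of smallest size. -/
theorem smallest_axp_via_hitting_sets (m : ℕ) (D : Fin m → Type) (K : Type)
    (κ : (∀ i, D i) → K) (v : ∀ i, D i) (c : K) (hv : κ v = c)
    (𝒞 : Set (Finset (Fin m)))
    (h𝒞 : ∀ Y ∈ 𝒞, ∃ x : ∀ i, D i, (∀ i ∉ Y, x i = v i) ∧ κ x ≠ c)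
    (Xstar : Finset (Fin m))
    (hhit : ∀ Y ∈ 𝒞, (Xstar ∩ Y).Nonempty)
    (hminhs : ∀ Z : Finset (Fin m), (∀ Y ∈ 𝒞, (Z ∩ Y).Nonempty) →
      Xstar.card ≤ Z.card)
    (hwaxp : ∀ x : ∀ i, D i, (∀ i ∈ Xstar, x i = v i) → κ x = c) :
    (∀ X : Finset (Fin m),
        (∀ x : ∀ i, D i, (∀ i ∈ X, x i = v i) → κ x = c) →
        Xstar.card ≤ X.card) ∧
    (∀ X' : Finset (Fin m), X' ⊂ Xstar →
        ¬ ∀ x : ∀ i, D i, (∀ i ∈ X', x i = v i) → κ x = c) := by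
  have key : ∀ X : Finset (Fin m),
      (∀ x : ∀ i, D i, (∀ i ∈ X, x i = v i) → κ x = c) →
      Xstar.card ≤ X.card := by
    intro X hX
    apply hminhs
    intro Y hY
    obtain ⟨x, hx, hxc⟩ := h𝒞 Y hY
    by_contra hempty
    rw [Finset.not_nonempty_iff_eq_empty] at hempty
    exact hxc (hX x (fun i hi => hx i (fun hiY =>
      Finset.notMem_empty i (hempty ▸ Finset.mem_inter.mpr ⟨hi, hiY⟩))))
  refine ⟨key, fun X' hX' h => ?_⟩
  exact absurd (key X' h) (not_le.mpr (Finset.card_lt_card hX'))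
end
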